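/- arXiv:1805.02570 — 2 statements merged into one kernel-verified Lean document; each statement's English description precedes it below -/
import Mathlib

section
/- Let a and b be two distinct points on the x-axis and let p be any point of the plane. Then the union of all circles C_p(r), taken over all points r of the closed line segment from a to b, equals the closure of the symmetric difference D_p(a) △ D_p(b) of the two closed disks D_p(a) and D_p(b); that is, ⋃_{r ∈ [a,b]} C_p(r) = closure((D_p(a) \ D_p(b)) ∪ (D_p(b) \ D_p(a))). -/
noncomputable def pt (u v : ℝ) : EuclideanSpace ℝ (Fin 2) :=
  (WithLp.equiv 2 (Fin 2 → ℝ)).symm ![u, v]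

@[simp] lemma pt_zero (u v : ℝ) : pt u v 0 = u := rfl
@[simp] lemma pt_one (u v : ℝ) : pt u v 1 = v := rfl

lemma dist_sq (u v : EuclideanSpace ℝ (Fin 2)) :
    dist u v ^ 2 = (u 0 - v 0)^2 + (u 1 - v 1)^2 := by
  rw [EuclideanSpace.dist_eq, Real.sq_sqrt (by positivity)]
  simp [Fin.sum_univ_two, Real.dist_eq, sq_abs]

lemma dist_le_l1 (u v : EuclideanSpace ℝ (Fin 2)) :
    dist u v ≤ |u 0 - v 0| + |u 1 - v 1| := by
  rw [EuclideanSpace.dist_eq, Fin.sum_univ_two]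
  simp only [Real.dist_eq, sq_abs]
  have h : (u 0 - v 0)^2 + (u 1 - v 1)^2 ≤ (|u 0 - v 0| + |u 1 - v 1|)^2 := by
    nlinarith [abs_nonneg (u 0 - v 0), abs_nonneg (u 1 - v 1), sq_abs (u 0 - v 0),
      sq_abs (u 1 - v 1), mul_nonneg (abs_nonneg (u 0 - v 0)) (abs_nonneg (u 1 - v 1))]
  calc Real.sqrt ((u 0 - v 0)^2 + (u 1 - v 1)^2)
      ≤ Real.sqrt ((|u 0 - v 0| + |u 1 - v 1|)^2) := Real.sqrt_le_sqrt h
  _ = _ := Real.sqrt_sq (by positivity)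

lemma dist_le_iff_sq (u v w z : EuclideanSpace ℝ (Fin 2)) :
    dist u v ≤ dist w z ↔ dist u v ^ 2 ≤ dist w z ^ 2 := by
  constructor
  · intro h; nlinarith [dist_nonneg (x := u) (y := v)]
  · intro h; nlinarith [dist_nonneg (x := u) (y := v), dist_nonneg (x := w) (y := z)]

lemma dist_lt_iff_sq (u v w z : EuclideanSpace ℝ (Fin 2)) :
    dist u v < dist w z ↔ dist u v ^ 2 < dist w z ^ 2 := by
  constructor
  · intro h; nlinarith [dist_nonneg (x := u) (y := v)]
  · intro h; nlinarith [dist_nonneg (x := u) (y := v), dist_nonneg (x := w) (y := z)]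

lemma dist_eq_iff_sq (u v w z : EuclideanSpace ℝ (Fin 2)) :
    dist u v = dist w z ↔ dist u v ^ 2 = dist w z ^ 2 := by
  constructor
  · intro h; rw [h]
  · intro h; nlinarith [dist_nonneg (x := u) (y := v), dist_nonneg (x := w) (y := z)]

lemma mem_cb_iff (c p y : EuclideanSpace ℝ (Fin 2)) :
    y ∈ Metric.closedBall c (dist c p) ↔ dist y c ^ 2 ≤ dist c p ^ 2 := by
  rw [Metric.mem_closedBall, dist_le_iff_sq y c c p]

lemma smul_comb_apply (u v : ℝ) (a b : EuclideanSpace ℝ (Fin 2)) (i : Fin 2) :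
    (u • a + v • b) i = u * a i + v * b i := by
  simp [PiLp.add_apply, PiLp.smul_apply]

lemma F_affine (a b p x : EuclideanSpace ℝ (Fin 2)) (ha : a 1 = 0) (hb : b 1 = 0)
    (u v : ℝ) (huv : u + v = 1) :
    dist x (u • a + v • b) ^ 2 - dist (u • a + v • b) p ^ 2 =
      u * (dist x a ^ 2 - dist a p ^ 2) + v * (dist x b ^ 2 - dist b p ^ 2) := by
  have hv : v = 1 - u := by linarith
  subst hv
  rw [dist_sq, dist_sq, dist_sq, dist_sq, dist_sq, dist_sq,
    smul_comb_apply, smul_comb_apply, ha, hb]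
  ring

lemma stepA (a b p x : EuclideanSpace ℝ (Fin 2)) (ha : a 1 = 0) (hb : b 1 = 0)
    (h : x ∈ ⋃ r ∈ segment ℝ a b, Metric.sphere r (dist r p)) :
    (dist x a ^ 2 - dist a p ^ 2) * (dist x b ^ 2 - dist b p ^ 2) ≤ 0 := by
  rw [Set.mem_iUnion₂] at h
  obtain ⟨r, hr, hx⟩ := h
  obtain ⟨u, v, hu, hv, huv, rfl⟩ := hr
  have h0 : dist x (u • a + v • b) = dist (u • a + v • b) p := hx
  set Fa := dist x a ^ 2 - dist a p ^ 2 with hFa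
  set Fb := dist x b ^ 2 - dist b p ^ 2 with hFb
  have key : u * Fa + v * Fb = 0 := by
    rw [← F_affine a b p x ha hb u v huv]
    rw [(dist_eq_iff_sq _ _ _ _).mp h0]; ring
  nlinarith [mul_nonneg hu (sq_nonneg Fa), mul_nonneg hv (sq_nonneg Fb),
    mul_self_nonneg (Fa - Fb)]

lemma stepB (a b p x : EuclideanSpace ℝ (Fin 2)) (ha : a 1 = 0) (hb : b 1 = 0)
    (h : (dist x a ^ 2 - dist a p ^ 2) * (dist x b ^ 2 - dist b p ^ 2) ≤ 0) :
    x ∈ ⋃ r ∈ segment ℝ a b, Metric.sphere r (dist r p) := by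
  rw [Set.mem_iUnion₂]
  set Fa := dist x a ^ 2 - dist a p ^ 2 with hFa
  set Fb := dist x b ^ 2 - dist b p ^ 2 with hFb
  by_cases h0 : Fa = 0
  · exact ⟨a, left_mem_segment ℝ a b,
      show dist x a = dist a p from (dist_eq_iff_sq _ _ _ _).mpr (by linarith)⟩
  · have hne : Fa - Fb ≠ 0 := by
      rcases lt_or_gt_of_ne h0 with hlt | hgt
      · have : 0 ≤ Fb := by nlinarith
        intro hc; apply h0; nlinarith
      · have : Fb ≤ 0 := by nlinarith
        intro hc; apply h0; nlinarith
    set t := Fa / (Fa - Fb) with ht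
    have htmul : t * (Fa - Fb) = Fa := div_mul_cancel₀ _ hne
    have hcases : (Fa < 0 ∧ 0 ≤ Fb ∧ Fa - Fb < 0) ∨ (0 < Fa ∧ Fb ≤ 0 ∧ 0 < Fa - Fb) := by
      rcases lt_or_gt_of_ne h0 with hlt | hgt
      · left; refine ⟨hlt, by nlinarith, by nlinarith⟩
      · right; refine ⟨hgt, by nlinarith, by nlinarith⟩
    have ht0 : 0 ≤ t := by
      rcases hcases with ⟨h1, h2, h3⟩ | ⟨h1, h2, h3⟩ <;> nlinarith [htmul]
    have ht1 : t ≤ 1 := by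
      rcases hcases with ⟨h1, h2, h3⟩ | ⟨h1, h2, h3⟩ <;> nlinarith [htmul]
    refine ⟨(1 - t) • a + t • b, ⟨1 - t, t, by linarith, ht0, by ring, rfl⟩, ?_⟩
    show dist x _ = dist _ p
    rw [dist_eq_iff_sq]
    have := F_affine a b p x ha hb (1 - t) t (by ring)
    have hz : (1 - t) * Fa + t * Fb = 0 := by linear_combination -htmul
    rw [hFa, hFb] at hz
    linarith [this, hz]

lemma stepC (a b p : EuclideanSpace ℝ (Fin 2)) :
    closure ((Metric.closedBall a (dist a p) \ Metric.closedBall b (dist b p)) ∪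
        (Metric.closedBall b (dist b p) \ Metric.closedBall a (dist a p))) ⊆
      {x | (dist x a ^ 2 - dist a p ^ 2) * (dist x b ^ 2 - dist b p ^ 2) ≤ 0} := by
  apply closure_minimal
  · rintro x (⟨h1, h2⟩ | ⟨h1, h2⟩) <;>
      · rw [mem_cb_iff] at h1 h2; push_neg at h2
        simp only [Set.mem_setOf_eq]
        nlinarith
  · have hc : Continuous fun x : EuclideanSpace ℝ (Fin 2) =>
        (dist x a ^ 2 - dist a p ^ 2) * (dist x b ^ 2 - dist b p ^ 2) := by fun_prop
    exact isClosed_le hc continuous_const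

lemma near_strict (a b p x : EuclideanSpace ℝ (Fin 2))
    (h0 : dist x a = dist a p) (hlt : dist x b < dist b p) :
    x ∈ closure (Metric.closedBall b (dist b p) \ Metric.closedBall a (dist a p)) := by
  have hxa : x ≠ a := by
    rintro rfl
    have hp : dist x p = 0 := by
      have := h0.symm
      rwa [dist_self] at this
    rw [dist_eq_zero.mp hp] at hlt
    rw [dist_comm] at hlt
    exact lt_irrefl _ hlt
  have hd : 0 < dist x a := dist_pos.mpr hxa
  rw [Metric.mem_closure_iff]
  intro ε hε
  have hxball : x ∈ Metric.ball b (dist b p) := Metric.mem_ball.mpr hlt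
  obtain ⟨δ₀, hδ₀, hsub⟩ := Metric.isOpen_iff.mp Metric.isOpen_ball x hxball
  set δ := min δ₀ ε / 2 with hδdef
  have hδpos : 0 < δ := by
    have := lt_min_iff.mpr ⟨hδ₀, hε⟩; positivity
  set c := δ / dist x a with hc
  have hcpos : 0 < c := by positivity
  set y := x + c • (x - a) with hy
  have hyx : dist y x = δ := by
    rw [dist_eq_norm]
    have h1 : y - x = c • (x - a) := by rw [hy]; abel
    rw [h1, norm_smul, Real.norm_eq_abs, abs_of_pos hcpos, ← dist_eq_norm, hc]
    field_simp
  have hya : dist y a = dist x a + δ := by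
    have h1 : y - a = (1 + c) • (x - a) := by rw [hy]; module
    rw [dist_eq_norm, h1, norm_smul, Real.norm_eq_abs, abs_of_pos (by linarith),
      ← dist_eq_norm, hc]
    field_simp
  refine ⟨y, ⟨?_, ?_⟩, ?_⟩
  · apply Metric.ball_subset_closedBall
    apply hsub
    rw [Metric.mem_ball, hyx]
    have : min δ₀ ε ≤ δ₀ := min_le_left _ _
    linarith
  · rw [Metric.mem_closedBall]
    push_neg
    rw [hya, ← h0]
    linarith
  · rw [dist_comm, hyx]
    have : min δ₀ ε ≤ ε := min_le_right _ _
    linarith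

set_option maxHeartbeats 1000000 in
/-- Crossing case: `x` lies on both circles and is off the axis. -/
lemma caseI (a b p x : EuclideanSpace ℝ (Fin 2)) (ha : a 1 = 0) (hb : b 1 = 0)
    (hab0 : a 0 ≠ b 0)
    (h0a : dist x a ^ 2 = dist a p ^ 2) (h0b : dist x b ^ 2 = dist b p ^ 2)
    (hx1 : x 1 ≠ 0) :
    x ∈ closure (Metric.closedBall b (dist b p) \ Metric.closedBall a (dist a p)) := by
  rw [Metric.mem_closure_iff]
  intro ε hε
  set Δ : ℝ := b 0 - a 0 with hΔ
  have hΔne : Δ ≠ 0 := sub_ne_zero.mpr (Ne.symm hab0)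
  have hΔ2 : 0 < Δ^2 := by positivity
  set w : ℝ := -Δ * (2 * x 0 - a 0 - b 0) / (2 * x 1) with hw
  set K : ℝ := Δ^2 + w^2 with hK
  have hKpos : 0 < K := by positivity
  set M : ℝ := |Δ| + |w| + 1 with hM
  have hMpos : 0 < M := by positivity
  set δ : ℝ := min (ε / M) (Δ^2 / (K + 1)) / 2 with hδ
  have hδpos : 0 < δ := by
    have h1 : 0 < ε / M := by positivity
    have h2 : 0 < Δ^2 / (K + 1) := by positivity
    have := lt_min_iff.mpr ⟨h1, h2⟩
    positivity
  clear_value Δ w K M δ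
  set y := pt (x 0 + δ * Δ) (x 1 + δ * w) with hy
  clear_value y
  have hwx1 : w * x 1 = -Δ * (2 * x 0 - a 0 - b 0) / 2 := by
    rw [hw]; field_simp
  have hya : dist y a ^ 2 = dist a p ^ 2 + δ * Δ^2 + δ^2 * K := by
    rw [← h0a, dist_sq, dist_sq, hy, pt_zero, pt_one, ha]
    have : (x 0 + δ * Δ - a 0)^2 + (x 1 + δ * w - 0)^2
        = (x 0 - a 0)^2 + (x 1 - 0)^2 + 2*δ*(Δ*(x 0 - a 0) + w * x 1) + δ^2*(Δ^2 + w^2) := by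
      ring
    rw [this, hwx1, hK, hΔ]
    ring
  have hyb : dist y b ^ 2 = dist b p ^ 2 - δ * Δ^2 + δ^2 * K := by
    rw [← h0b, dist_sq, dist_sq, hy, pt_zero, pt_one, hb]
    have : (x 0 + δ * Δ - b 0)^2 + (x 1 + δ * w - 0)^2
        = (x 0 - b 0)^2 + (x 1 - 0)^2 + 2*δ*(Δ*(x 0 - b 0) + w * x 1) + δ^2*(Δ^2 + w^2) := by
      ring
    rw [this, hwx1, hK, hΔ]
    ring
  have hδsmall : δ * (K + 1) ≤ Δ^2 / 2 := by
    have h1 : δ ≤ Δ^2 / (K + 1) / 2 := by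
      rw [hδ]; have := min_le_right (ε / M) (Δ^2 / (K + 1)); linarith
    have h2 : 0 < K + 1 := by linarith
    calc δ * (K + 1) ≤ (Δ^2 / (K + 1) / 2) * (K + 1) := by
          apply mul_le_mul_of_nonneg_right h1 (le_of_lt h2)
    _ = Δ^2 / 2 := by field_simp
  have hKd : δ * K ≤ Δ^2 := by nlinarith [hδpos, hKpos, hΔ2, hδsmall]
  refine ⟨y, ⟨?_, ?_⟩, ?_⟩
  · rw [mem_cb_iff, hyb]
    nlinarith [hδpos, hKd]
  · rw [mem_cb_iff]
    push_neg
    rw [hya]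
    nlinarith [hδpos, hΔ2, hKpos, mul_pos hδpos hδpos]
  · have hbound := dist_le_l1 x y
    have hx0 : x 0 - y 0 = -(δ * Δ) := by rw [hy, pt_zero]; ring
    have hx1' : x 1 - y 1 = -(δ * w) := by rw [hy, pt_one]; ring
    rw [hx0, hx1'] at hbound
    have habs : |(-(δ * Δ))| + |(-(δ * w))| = δ * (|Δ| + |w|) := by
      rw [abs_neg, abs_neg, abs_mul, abs_mul, abs_of_pos hδpos]; ring
    rw [habs] at hbound
    have hδM : δ * M ≤ ε / 2 := by
      have h1 : δ ≤ ε / M / 2 := by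
        rw [hδ]; have := min_le_left (ε / M) (Δ^2 / (K + 1)); linarith
      calc δ * M ≤ (ε / M / 2) * M := mul_le_mul_of_nonneg_right h1 (le_of_lt hMpos)
      _ = ε / 2 := by field_simp
    have : δ * (|Δ| + |w|) < δ * M := by
      rw [hM]; nlinarith [hδpos]
    linarith

set_option maxHeartbeats 1000000 in
/-- Tangency case at `p` on the axis. -/
lemma caseII (a b p : EuclideanSpace ℝ (Fin 2)) (ha : a 1 = 0) (hb : b 1 = 0)
    (hp : p 1 = 0) (α : ℝ)
    (hA : 2 * α * (a 0 - p 0) < 1) (hB : 1 < 2 * α * (b 0 - p 0)) :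
    p ∈ closure (Metric.closedBall b (dist b p) \ Metric.closedBall a (dist a p)) := by
  rw [Metric.mem_closure_iff]
  intro ε hε
  set A : ℝ := a 0 - p 0 with hA'
  set B : ℝ := b 0 - p 0 with hB'
  have hBpos : 0 < 2 * α * B - 1 := by linarith
  set s : ℝ := min 1 (min (ε / (2 * (|α| + 1))) ((2 * α * B - 1) / (α^2 + 1))) with hs
  have hspos : 0 < s := by
    apply lt_min (by norm_num)
    apply lt_min (by positivity) (by positivity)
  have hs1 : s ≤ 1 := min_le_left _ _
  have hsε : s ≤ ε / (2 * (|α| + 1)) := le_trans (min_le_right _ _) (min_le_left _ _)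
  have hsB : s ≤ (2 * α * B - 1) / (α^2 + 1) := le_trans (min_le_right _ _) (min_le_right _ _)
  have hsB' : (α^2 + 1) * s ≤ 2 * α * B - 1 := by
    have h2 : (0:ℝ) < α^2 + 1 := by positivity
    calc (α^2 + 1) * s ≤ (α^2 + 1) * ((2 * α * B - 1) / (α^2 + 1)) :=
          mul_le_mul_of_nonneg_left hsB (le_of_lt h2)
    _ = 2 * α * B - 1 := by field_simp
  clear_value A B s
  set y := pt (p 0 + α * s^2) s with hy
  clear_value y
  have hyb : dist y b ^ 2 = dist b p ^ 2 + s^2 * (1 - 2 * α * B + α^2 * s^2) := by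
    rw [dist_sq, dist_sq, hy, pt_zero, pt_one, hb, hp, hB']
    ring
  have hya : dist y a ^ 2 = dist a p ^ 2 + s^2 * (1 - 2 * α * A + α^2 * s^2) := by
    rw [dist_sq, dist_sq, hy, pt_zero, pt_one, ha, hp, hA']
    ring
  have hss2 : s^2 ≤ s := by nlinarith [hspos, hs1]
  refine ⟨y, ⟨?_, ?_⟩, ?_⟩
  · rw [mem_cb_iff, hyb]
    have hss : α^2 * s^2 ≤ (α^2 + 1) * s := by
      nlinarith [mul_le_mul_of_nonneg_left hss2 (sq_nonneg α), hspos]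
    nlinarith [sq_nonneg s, hspos, hsB']
  · rw [mem_cb_iff]
    push_neg
    rw [hya]
    nlinarith [hspos, mul_pos hspos hspos, sq_nonneg (α * s), hA]
  · have hbound := dist_le_l1 p y
    have h0 : p 0 - y 0 = -(α * s^2) := by rw [hy, pt_zero]; ring
    have h1 : p 1 - y 1 = -s := by rw [hy, pt_one, hp]; ring
    rw [h0, h1] at hbound
    have habs : |(-(α * s^2))| + |(-s)| ≤ (|α| + 1) * s := by
      rw [abs_neg, abs_neg, abs_mul, abs_of_pos hspos]
      have : |s^2| = s^2 := abs_of_pos (by positivity)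
      rw [this]
      nlinarith [mul_le_mul_of_nonneg_left hss2 (abs_nonneg α)]
    have hfin : (|α| + 1) * s ≤ ε / 2 := by
      have h2 : (0:ℝ) < |α| + 1 := by positivity
      calc (|α| + 1) * s ≤ (|α| + 1) * (ε / (2 * (|α| + 1))) :=
            mul_le_mul_of_nonneg_left hsε (le_of_lt h2)
      _ = ε / 2 := by field_simp
    linarith

lemma bothzero (a b p x : EuclideanSpace ℝ (Fin 2)) (ha : a 1 = 0) (hb : b 1 = 0)
    (hab0 : a 0 ≠ b 0)
    (h0a : dist x a ^ 2 = dist a p ^ 2) (h0b : dist x b ^ 2 = dist b p ^ 2) :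
    x ∈ closure ((Metric.closedBall a (dist a p) \ Metric.closedBall b (dist b p)) ∪
        (Metric.closedBall b (dist b p) \ Metric.closedBall a (dist a p))) := by
  have Ea : (x 0 - a 0)^2 + (x 1 - 0)^2 = (a 0 - p 0)^2 + (0 - p 1)^2 := by
    have := h0a; rw [dist_sq, dist_sq, ha] at this; exact this
  have Eb : (x 0 - b 0)^2 + (x 1 - 0)^2 = (b 0 - p 0)^2 + (0 - p 1)^2 := by
    have := h0b; rw [dist_sq, dist_sq, hb] at this; exact this
  have hx0 : x 0 = p 0 := by
    have key : (x 0 - p 0) * (b 0 - a 0) = 0 := by linear_combination (Ea - Eb) / 2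
    rcases mul_eq_zero.mp key with h | h
    · linarith [sub_eq_zero.mp h]
    · exact (hab0 (sub_eq_zero.mp h).symm).elim
  have hx1sq : x 1 ^ 2 = p 1 ^ 2 := by
    rw [hx0] at Ea; nlinarith [Ea]
  by_cases hx1 : x 1 = 0
  · -- x = p, on the axis
    have hp1 : p 1 = 0 := by nlinarith [hx1sq]
    have hxp : x = p := by
      ext i
      fin_cases i
      · exact hx0
      · show x 1 = p 1
        rw [hx1, hp1]
    subst hxp
    set A : ℝ := a 0 - x 0 with hA
    set B : ℝ := b 0 - x 0 with hB
    have hABne : A ≠ B := fun h => hab0 (by rw [hA, hB] at h; linarith)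
    by_cases hAB : A + B = 0
    · have hBne : B ≠ 0 := by
        intro h; apply hABne; rw [h]; linarith
      have h1 : 2 * (1 / B) * B = 2 := by field_simp
      have h2 : 2 * (1 / B) * A = -2 := by
        have hAemB : A = -B := by linarith
        rw [hAemB]; field_simp
      refine closure_mono Set.subset_union_right (caseII a b x ha hb hx1 (1 / B) ?_ ?_)
      · rw [← hA]; rw [h2]; norm_num
      · rw [← hB]; rw [h1]; norm_num
    · set α : ℝ := 1 / (A + B) with hα
      have hsum : α * A + α * B = 1 := by rw [hα]; field_simp
      rcases lt_trichotomy (2 * α * A) 1 with hlt | heq | hgt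
      · have hgtB : 1 < 2 * α * B := by linarith
        refine closure_mono Set.subset_union_right (caseII a b x ha hb hx1 α ?_ ?_)
        · rw [← hA]; exact hlt
        · rw [← hB]; exact hgtB
      · exfalso
        have h1 : α * A = α * B := by linarith
        have hαne : α ≠ 0 := one_div_ne_zero hAB
        exact hABne (mul_left_cancel₀ hαne h1)
      · have hltB : 2 * α * B < 1 := by linarith
        refine closure_mono Set.subset_union_left (caseII b a x hb ha hx1 α ?_ ?_)
        · rw [← hB]; exact hltB
        · rw [← hA]; exact hgt
  · exact closure_mono Set.subset_union_right (caseI a b p x ha hb hab0 h0a h0b hx1)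

lemma stepD (a b p x : EuclideanSpace ℝ (Fin 2)) (ha : a 1 = 0) (hb : b 1 = 0)
    (hab0 : a 0 ≠ b 0)
    (h : (dist x a ^ 2 - dist a p ^ 2) * (dist x b ^ 2 - dist b p ^ 2) ≤ 0) :
    x ∈ closure ((Metric.closedBall a (dist a p) \ Metric.closedBall b (dist b p)) ∪
        (Metric.closedBall b (dist b p) \ Metric.closedBall a (dist a p))) := by
  set Fa := dist x a ^ 2 - dist a p ^ 2 with hFa
  set Fb := dist x b ^ 2 - dist b p ^ 2 with hFb
  rcases lt_trichotomy Fa 0 with h1 | h1 | h1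
  · rcases lt_trichotomy Fb 0 with h2 | h2 | h2
    · exfalso; nlinarith
    · -- Fa < 0, Fb = 0 : x on sphere b strictly inside ball a
      refine closure_mono Set.subset_union_left (near_strict b a p x ?_ ?_)
      · exact (dist_eq_iff_sq _ _ _ _).mpr (by linarith)
      · exact (dist_lt_iff_sq _ _ _ _).mpr (by linarith)
    · -- Fa < 0 < Fb : x in the symmetric difference itself
      apply subset_closure
      left
      refine ⟨(mem_cb_iff _ _ _).mpr (by linarith), fun hc => ?_⟩
      rw [mem_cb_iff] at hc; linarith
  · rcases lt_trichotomy Fb 0 with h2 | h2 | h2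
    · refine closure_mono Set.subset_union_right (near_strict a b p x ?_ ?_)
      · exact (dist_eq_iff_sq _ _ _ _).mpr (by linarith)
      · exact (dist_lt_iff_sq _ _ _ _).mpr (by linarith)
    · exact bothzero a b p x ha hb hab0 (by linarith) (by linarith)
    · apply subset_closure
      left
      refine ⟨(mem_cb_iff _ _ _).mpr (by linarith), fun hc => ?_⟩
      rw [mem_cb_iff] at hc; linarith
  · have h2 : Fb ≤ 0 := by nlinarith
    apply subset_closure
    right
    refine ⟨(mem_cb_iff _ _ _).mpr (by linarith), fun hc => ?_⟩
    rw [mem_cb_iff] at hc; linarith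

/-- Consequence of Lemma 1(ii): for distinct points `a`, `b` on the x-axis and
any point `p`, the union of the circles `C_p(r)` over `r` in the segment
`[a, b]` equals the closure of the symmetric difference of the closed disks
`D_p(a)` and `D_p(b)`. -/
theorem iUnion_circles_eq_closure_symmDiff
    (a b p : EuclideanSpace ℝ (Fin 2))
    (ha : a 1 = 0) (hb : b 1 = 0) (hab : a ≠ b) :
    (⋃ r ∈ segment ℝ a b, Metric.sphere r (dist r p)) =
      closure ((Metric.closedBall a (dist a p) \ Metric.closedBall b (dist b p)) ∪
        (Metric.closedBall b (dist b p) \ Metric.closedBall a (dist a p))) := by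
  have hab0 : a 0 ≠ b 0 := by
    intro h0
    apply hab
    ext i
    fin_cases i
    · exact h0
    · show a 1 = b 1
      rw [ha, hb]
  ext x
  constructor
  · intro h
    exact stepD a b p x ha hb hab0 (stepA a b p x ha hb h)
  · intro h
    exact stepB a b p x ha hb (stepC a b p h)
end

section
/- Let a and b be points on the x-axis with a₁ ≤ b₁, let p be a point of the plane, and let r be a point of the segment [a,b]. Suppose a line segment I intersects the circle C_p(r) at two distinct points w₁ and w₂ such that the segment [w₁,w₂] lies entirely in the closure of D_p(a) \ D_p(b). Then I is tangent to some circle C_p(r') with r' ∈ [a,b], with the point of tangency on [w₁,w₂]; precisely, there exist a point r' ∈ [a,b] and a point z ∈ [w₁,w₂] such that I ∩ D_p(r') = {z}. -/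
open Set Metric

private lemma sq_le_sq_iff_of_nonneg' {x y : ℝ} (hx : 0 ≤ x) (hy : 0 ≤ y) :
    x ≤ y ↔ x ^ 2 ≤ y ^ 2 := by
  constructor <;> intro h <;> nlinarith

private lemma dist_sq_eq' (x y : EuclideanSpace ℝ (Fin 2)) :
    dist x y ^ 2 = (x 0 - y 0) ^ 2 + (x 1 - y 1) ^ 2 := by
  rw [EuclideanSpace.dist_eq, Real.sq_sqrt (by positivity)]
  simp [Fin.sum_univ_two, Real.dist_eq, sq_abs]

private lemma comb_apply' (θ : ℝ) (x y : EuclideanSpace ℝ (Fin 2)) (i : Fin 2) :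
    ((1 - θ) • x + θ • y) i = (1 - θ) * x i + θ * y i := rfl

private lemma ext2' {x y : EuclideanSpace ℝ (Fin 2)} (h0 : x 0 = y 0) (h1 : x 1 = y 1) :
    x = y := by
  ext i
  fin_cases i
  · exact h0
  · exact h1

private def Qp (A al be u₁ u₂ l u : ℝ) : ℝ :=
  A * (u - u₁) * (u - u₂) + l * (al * u + be)

private lemma key_lemma (A al be u₁ u₂ L : ℝ) (hA : 0 < A) (h12 : u₁ < u₂) (hL : 0 ≤ L)
    (hg1 : 0 ≤ al * u₁ + be) (hg2 : 0 ≤ al * u₂ + be)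
    (hQL : ∀ u, u₁ ≤ u → u ≤ u₂ → 0 ≤ Qp A al be u₁ u₂ L u) :
    ∃ l, 0 ≤ l ∧ l ≤ L ∧ ∃ w, u₁ ≤ w ∧ w ≤ u₂ ∧ Qp A al be u₁ u₂ l w = 0 ∧
      (∀ u, 0 ≤ Qp A al be u₁ u₂ l u) ∧ (∀ u, Qp A al be u₁ u₂ l u = 0 → u = w) := by
  have hQcont : ∀ u, Continuous fun l => Qp A al be u₁ u₂ l u := by
    intro u; unfold Qp; fun_prop
  have hconv : ∀ l x y z, Qp A al be u₁ u₂ l x < 0 → Qp A al be u₁ u₂ l y < 0 →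
      x ≤ z → z ≤ y → Qp A al be u₁ u₂ l z < 0 := by
    intro l x y z hx hy hxz hzy
    rcases eq_or_lt_of_le (hxz.trans hzy) with h | h
    · have hzx : z = x := le_antisymm (by rw [h]; exact hzy) hxz
      rwa [hzx]
    · unfold Qp at *
      by_contra hq
      push_neg at hq
      have h3 : 0 ≤ A * (y - x) * ((y - z) * (z - x)) :=
        mul_nonneg (mul_nonneg hA.le (by linarith)) (mul_nonneg (by linarith) (by linarith))
      have h4 : 0 < (y - z) * (-(A * (x - u₁) * (x - u₂) + l * (al * x + be))) +
          (z - x) * (-(A * (y - u₁) * (y - u₂) + l * (al * y + be))) := by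
        rcases eq_or_lt_of_le hzy with hzy' | hzy'
        · have hzx : 0 < z - x := by rw [hzy']; linarith
          nlinarith [mul_pos hzx (by linarith : 0 < -(A * (y - u₁) * (y - u₂) + l * (al * y + be))), mul_nonneg (by linarith : (0:ℝ) ≤ y - z) (by linarith : (0:ℝ) ≤ -(A * (x - u₁) * (x - u₂) + l * (al * x + be)))]
        · nlinarith [mul_pos (by linarith : (0:ℝ) < y - z) (by linarith : 0 < -(A * (x - u₁) * (x - u₂) + l * (al * x + be))), mul_nonneg (by linarith : (0:ℝ) ≤ z - x) (by linarith : (0:ℝ) ≤ -(A * (y - u₁) * (y - u₂) + l * (al * y + be)))]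
      nlinarith [h3, h4, mul_nonneg (by linarith : (0:ℝ) ≤ y - x) hq]
  have hQu₁ : ∀ l, 0 ≤ l → 0 ≤ Qp A al be u₁ u₂ l u₁ := by
    intro l hl
    have h : Qp A al be u₁ u₂ l u₁ = l * (al * u₁ + be) := by unfold Qp; ring
    rw [h]; exact mul_nonneg hl hg1
  have hQu₂ : ∀ l, 0 ≤ l → 0 ≤ Qp A al be u₁ u₂ l u₂ := by
    intro l hl
    have h : Qp A al be u₁ u₂ l u₂ = l * (al * u₂ + be) := by unfold Qp; ring
    rw [h]; exact mul_nonneg hl hg2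
  have hclass : ∀ l, 0 ≤ l →
      (∀ u, u₁ ≤ u → 0 ≤ Qp A al be u₁ u₂ l u) ∨
      (∀ u, u ≤ u₁ ∨ u₂ ≤ u → 0 ≤ Qp A al be u₁ u₂ l u) ∨
      (∀ u, u ≤ u₂ → 0 ≤ Qp A al be u₁ u₂ l u) := by
    intro l hl
    by_cases hlow : ∃ u, u < u₁ ∧ Qp A al be u₁ u₂ l u < 0
    · left; intro v hv; by_contra hneg; push_neg at hneg
      obtain ⟨x, hxu, hxn⟩ := hlow
      exact absurd (hQu₁ l hl) (not_le.2 (hconv l x v u₁ hxn hneg hxu.le hv))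
    · by_cases hhigh : ∃ u, u₂ < u ∧ Qp A al be u₁ u₂ l u < 0
      · right; right; intro v hv; by_contra hneg; push_neg at hneg
        obtain ⟨x, hxu, hxn⟩ := hhigh
        exact absurd (hQu₂ l hl) (not_le.2 (hconv l v x u₂ hneg hxn hv hxu.le))
      · right; left; intro v hv; by_contra hneg; push_neg at hneg
        push_neg at hlow hhigh
        rcases hv with hv | hv
        · rcases eq_or_lt_of_le hv with rfl | hv'
          · exact absurd (hQu₁ l hl) (not_le.2 hneg)
          · exact absurd hneg (not_lt.2 (hlow v hv'))
        · rcases eq_or_lt_of_le hv with rfl | hv'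
          · exact absurd (hQu₂ l hl) (not_le.2 hneg)
          · exact absurd hneg (not_lt.2 (hhigh v hv'))
  have hSa : IsClosed {l : ℝ | ∀ u, u₁ ≤ u → 0 ≤ Qp A al be u₁ u₂ l u} := by
    have h : {l : ℝ | ∀ u, u₁ ≤ u → 0 ≤ Qp A al be u₁ u₂ l u} =
        ⋂ u, ⋂ (_ : u₁ ≤ u), {l | 0 ≤ Qp A al be u₁ u₂ l u} := by
      ext l; simp
    rw [h]
    exact isClosed_iInter fun u => isClosed_iInter fun _ =>
      isClosed_le continuous_const (hQcont u)
  have hSc : IsClosed {l : ℝ | ∀ u, u ≤ u₂ → 0 ≤ Qp A al be u₁ u₂ l u} := by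
    have h : {l : ℝ | ∀ u, u ≤ u₂ → 0 ≤ Qp A al be u₁ u₂ l u} =
        ⋂ u, ⋂ (_ : u ≤ u₂), {l | 0 ≤ Qp A al be u₁ u₂ l u} := by
      ext l; simp
    rw [h]
    exact isClosed_iInter fun u => isClosed_iInter fun _ =>
      isClosed_le continuous_const (hQcont u)
  have hSb : IsClosed {l : ℝ | ∀ u, u ≤ u₁ ∨ u₂ ≤ u → 0 ≤ Qp A al be u₁ u₂ l u} := by
    have h : {l : ℝ | ∀ u, u ≤ u₁ ∨ u₂ ≤ u → 0 ≤ Qp A al be u₁ u₂ l u} =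
        ⋂ u, ⋂ (_ : u ≤ u₁ ∨ u₂ ≤ u), {l | 0 ≤ Qp A al be u₁ u₂ l u} := by
      ext l; simp
    rw [h]
    exact isClosed_iInter fun u => isClosed_iInter fun _ =>
      isClosed_le continuous_const (hQcont u)
  have hmidneg : Qp A al be u₁ u₂ 0 ((u₁ + u₂) / 2) < 0 := by
    unfold Qp; nlinarith [mul_pos hA (mul_pos (sub_pos.2 h12) (sub_pos.2 h12))]
  have h0notac : (0:ℝ) ∉ ({l : ℝ | ∀ u, u₁ ≤ u → 0 ≤ Qp A al be u₁ u₂ l u} ∪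
      {l : ℝ | ∀ u, u ≤ u₂ → 0 ≤ Qp A al be u₁ u₂ l u}) := by
    rintro (h | h)
    · exact absurd (h ((u₁ + u₂) / 2) (by linarith)) (not_le.2 hmidneg)
    · exact absurd (h ((u₁ + u₂) / 2) (by linarith)) (not_le.2 hmidneg)
  have claimPb : ∀ μ, 0 ≤ μ → (∀ l, 0 ≤ l → l ≤ μ → ∃ u, Qp A al be u₁ u₂ l u < 0) →
      ∀ l, 0 ≤ l → l ≤ μ → ∀ u, u ≤ u₁ ∨ u₂ ≤ u → 0 ≤ Qp A al be u₁ u₂ l u := by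
    intro μ hμ hneg
    by_contra hcon; push_neg at hcon
    obtain ⟨l0, hl00, hl0μ, v0, hv0, hv0n⟩ := hcon
    have hU : IsOpen ({l : ℝ | ∀ u, u₁ ≤ u → 0 ≤ Qp A al be u₁ u₂ l u} ∪
        {l : ℝ | ∀ u, u ≤ u₂ → 0 ≤ Qp A al be u₁ u₂ l u})ᶜ :=
      (hSa.union hSc).isOpen_compl
    have hV : IsOpen ({l : ℝ | ∀ u, u ≤ u₁ ∨ u₂ ≤ u → 0 ≤ Qp A al be u₁ u₂ l u})ᶜ :=
      hSb.isOpen_compl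
    have hcover : Icc (0:ℝ) μ ⊆
        ({l : ℝ | ∀ u, u₁ ≤ u → 0 ≤ Qp A al be u₁ u₂ l u} ∪
          {l : ℝ | ∀ u, u ≤ u₂ → 0 ≤ Qp A al be u₁ u₂ l u})ᶜ ∪
        ({l : ℝ | ∀ u, u ≤ u₁ ∨ u₂ ≤ u → 0 ≤ Qp A al be u₁ u₂ l u})ᶜ := by
      intro l hl
      by_contra hmem
      rw [mem_union, not_or] at hmem
      obtain ⟨h1, h2⟩ := hmem
      rw [mem_compl_iff, not_not] at h1 h2
      obtain ⟨u, hu⟩ := hneg l hl.1 hl.2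
      have : 0 ≤ Qp A al be u₁ u₂ l u := by
        rcases le_or_gt u u₁ with h' | h'
        · exact h2 u (Or.inl h')
        rcases le_or_gt u₂ u with h'' | h''
        · exact h2 u (Or.inr h'')
        rcases h1 with h1 | h1
        · exact h1 u h'.le
        · exact h1 u h''.le
      linarith
    have hne1 : (Icc (0:ℝ) μ ∩
        ({l : ℝ | ∀ u, u₁ ≤ u → 0 ≤ Qp A al be u₁ u₂ l u} ∪
          {l : ℝ | ∀ u, u ≤ u₂ → 0 ≤ Qp A al be u₁ u₂ l u})ᶜ).Nonempty :=
      ⟨0, ⟨le_refl 0, hμ⟩, h0notac⟩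
    have hne2 : (Icc (0:ℝ) μ ∩
        ({l : ℝ | ∀ u, u ≤ u₁ ∨ u₂ ≤ u → 0 ≤ Qp A al be u₁ u₂ l u})ᶜ).Nonempty := by
      refine ⟨l0, ⟨hl00, hl0μ⟩, ?_⟩
      intro hmem
      exact absurd (hmem v0 hv0) (not_le.2 hv0n)
    obtain ⟨l, hlI, hl1, hl2⟩ := isPreconnected_Icc _ _ hU hV hcover hne1 hne2
    rcases hclass l hlI.1 with h | h | h
    · exact hl1 (Or.inl h)
    · exact hl2 h
    · exact hl1 (Or.inr h)
  have hSne : {l : ℝ | (0 ≤ l ∧ l ≤ L) ∧ ∀ u, 0 ≤ Qp A al be u₁ u₂ l u}.Nonempty := by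
    by_contra h
    have hneg : ∀ l, 0 ≤ l → l ≤ L → ∃ u, Qp A al be u₁ u₂ l u < 0 := by
      intro l h0 h1
      by_contra h2; push_neg at h2
      exact h ⟨l, ⟨h0, h1⟩, h2⟩
    have hLb := claimPb L hL hneg L hL le_rfl
    obtain ⟨u, hu⟩ := hneg L hL le_rfl
    have : 0 ≤ Qp A al be u₁ u₂ L u := by
      rcases le_or_gt u u₁ with h' | h'
      · exact hLb u (Or.inl h')
      rcases le_or_gt u u₂ with h'' | h''
      · exact hQL u h'.le h''
      · exact hLb u (Or.inr h''.le)
    linarith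
  have hSclosed : IsClosed {l : ℝ | (0 ≤ l ∧ l ≤ L) ∧ ∀ u, 0 ≤ Qp A al be u₁ u₂ l u} := by
    have h : {l : ℝ | (0 ≤ l ∧ l ≤ L) ∧ ∀ u, 0 ≤ Qp A al be u₁ u₂ l u} =
        Icc 0 L ∩ ⋂ u, {l | 0 ≤ Qp A al be u₁ u₂ l u} := by
      ext l
      simp only [mem_setOf_eq, mem_inter_iff, mem_Icc, mem_iInter]
    rw [h]
    exact isClosed_Icc.inter (isClosed_iInter fun u =>
      isClosed_le continuous_const (hQcont u))
  have hSbdd : BddBelow {l : ℝ | (0 ≤ l ∧ l ≤ L) ∧ ∀ u, 0 ≤ Qp A al be u₁ u₂ l u} :=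
    ⟨0, fun l hl => hl.1.1⟩
  set lstar := sInf {l : ℝ | (0 ≤ l ∧ l ≤ L) ∧ ∀ u, 0 ≤ Qp A al be u₁ u₂ l u} with hls
  have hlS := hSclosed.csInf_mem hSne hSbdd
  obtain ⟨⟨hl0, hlL⟩, hQpos⟩ := hlS
  have hlpos : 0 < lstar := by
    rcases hl0.lt_or_eq with h | h
    · exact h
    · exfalso
      have := hQpos ((u₁ + u₂) / 2)
      rw [← h] at this
      linarith
  have hbelow : ∀ l, 0 ≤ l → l < lstar → ∃ u, u₁ < u ∧ u < u₂ ∧ Qp A al be u₁ u₂ l u < 0 := by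
    intro l h0 hlt
    have hneg : ∀ l', 0 ≤ l' → l' ≤ l → ∃ u, Qp A al be u₁ u₂ l' u < 0 := by
      intro l' h0' h1'
      by_contra h2; push_neg at h2
      have : lstar ≤ l' := csInf_le hSbdd ⟨⟨h0', by linarith⟩, h2⟩
      linarith
    obtain ⟨u, hu⟩ := hneg l h0 le_rfl
    have hPb := claimPb l h0 hneg l h0 le_rfl
    refine ⟨u, ?_, ?_, hu⟩
    · by_contra h'; push_neg at h'
      exact absurd (hPb u (Or.inl h')) (not_le.2 hu)
    · by_contra h'; push_neg at h'
      exact absurd (hPb u (Or.inr h')) (not_le.2 hu)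
  obtain ⟨w, hwmem, hwmin⟩ := isCompact_Icc.exists_isMinOn (nonempty_Icc.2 h12.le)
    (Continuous.continuousOn (by unfold Qp; fun_prop) :
      ContinuousOn (fun u => Qp A al be u₁ u₂ lstar u) (Icc u₁ u₂))
  have hw0 : Qp A al be u₁ u₂ lstar w = 0 := by
    refine le_antisymm ?_ (hQpos w)
    by_contra hc; push_neg at hc
    set G := |al * u₁ + be| + |al * u₂ + be| with hG
    have hgb : ∀ u, u₁ ≤ u → u ≤ u₂ → al * u + be ≤ G + 1 := by
      intro u h1 h2
      have t1 : 0 ≤ (u₂ - u) * (G - (al * u₁ + be)) :=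
        mul_nonneg (by linarith)
          (by rw [hG]; linarith [le_abs_self (al * u₁ + be), abs_nonneg (al * u₂ + be)])
      have t2 : 0 ≤ (u - u₁) * (G - (al * u₂ + be)) :=
        mul_nonneg (by linarith)
          (by rw [hG]; linarith [le_abs_self (al * u₂ + be), abs_nonneg (al * u₁ + be)])
      nlinarith [t1, t2]
    have hG1 : (0:ℝ) < G + 1 := by positivity
    set m := Qp A al be u₁ u₂ lstar w with hm
    set eps := min lstar (m / (G + 1)) with heps
    have heps0 : 0 < eps := lt_min hlpos (by positivity)
    have hepsl : eps ≤ lstar := min_le_left _ _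
    obtain ⟨v, hv1, hv2, hvneg⟩ := hbelow (lstar - eps) (by linarith) (by linarith)
    have hid : Qp A al be u₁ u₂ lstar v =
        Qp A al be u₁ u₂ (lstar - eps) v + eps * (al * v + be) := by unfold Qp; ring
    have h2 : eps * (al * v + be) ≤ eps * (G + 1) :=
      mul_le_mul_of_nonneg_left (hgb v hv1.le hv2.le) heps0.le
    have h3 : eps * (G + 1) ≤ m := by
      have hh := min_le_right lstar (m / (G + 1))
      calc eps * (G + 1) ≤ (m / (G + 1)) * (G + 1) :=
            mul_le_mul_of_nonneg_right hh hG1.le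
        _ = m := by field_simp
    have h4 : m ≤ Qp A al be u₁ u₂ lstar v := isMinOn_iff.mp hwmin v ⟨hv1.le, hv2.le⟩
    linarith
  have huniq : ∀ u, Qp A al be u₁ u₂ lstar u = 0 → u = w := by
    intro u hu
    by_contra hne
    have hid : Qp A al be u₁ u₂ lstar ((u + w) / 2) =
        (Qp A al be u₁ u₂ lstar u + Qp A al be u₁ u₂ lstar w) / 2 -
          A * ((u - w) / 2) ^ 2 := by unfold Qp; ring
    have hx : u - w ≠ 0 := sub_ne_zero.2 hne
    have hsq : 0 < ((u - w) / 2) ^ 2 := by positivity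
    have hmid := hQpos ((u + w) / 2)
    rw [hid, hu, hw0] at hmid
    nlinarith [mul_pos hA hsq]
  exact ⟨lstar, hl0, hlL, w, hwmem.1, hwmem.2, hw0, hQpos, huniq⟩
set_option maxHeartbeats 1000000 in
private theorem aux (a b p i₁ i₂ w₁ w₂ : EuclideanSpace ℝ (Fin 2))
    (ha : a 1 = 0) (hb : b 1 = 0)
    (t : ℝ) (ht0 : 0 ≤ t) (ht1 : t ≤ 1)
    (u₁ u₂ : ℝ) (h12 : u₁ < u₂) (hu10 : 0 ≤ u₁) (hu21 : u₂ ≤ 1)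
    (hne : i₁ ≠ i₂)
    (hw1def : (1 - u₁) • i₁ + u₁ • i₂ = w₁) (hw2def : (1 - u₂) • i₁ + u₂ • i₂ = w₂)
    (hs1 : dist w₁ ((1-t) • a + t • b) = dist ((1-t) • a + t • b) p)
    (hs2 : dist w₂ ((1-t) • a + t • b) = dist ((1-t) • a + t • b) p)
    (_hc : a 0 < b 0)
    (hseg : segment ℝ w₁ w₂ ⊆
      closure (closedBall a (dist a p) \ closedBall b (dist b p))) :
    ∃ r' ∈ segment ℝ a b, ∃ z ∈ segment ℝ w₁ w₂,
      segment ℝ i₁ i₂ ∩ closedBall r' (dist r' p) = {z} := by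
  subst hw1def
  subst hw2def
  have h12' : u₂ - u₁ ≠ 0 := sub_ne_zero.2 h12.ne'
  -- coordinate forms of sphere conditions
  have e1 : ((1-u₁) * i₁ 0 + u₁ * i₂ 0 - ((1-t) * a 0 + t * b 0))^2 +
      ((1-u₁) * i₁ 1 + u₁ * i₂ 1)^2 -
      ((((1-t) * a 0 + t * b 0) - p 0)^2 + (p 1)^2) = 0 := by
    have h : dist ((1-u₁) • i₁ + u₁ • i₂) ((1-t) • a + t • b) ^ 2 =
        dist ((1-t) • a + t • b) p ^ 2 := by rw [hs1]
    rw [dist_sq_eq', dist_sq_eq'] at h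
    simp only [comb_apply', ha, hb, mul_zero, add_zero, sub_zero, zero_sub, neg_sq] at h
    linarith
  have e2 : ((1-u₂) * i₁ 0 + u₂ * i₂ 0 - ((1-t) * a 0 + t * b 0))^2 +
      ((1-u₂) * i₁ 1 + u₂ * i₂ 1)^2 -
      ((((1-t) * a 0 + t * b 0) - p 0)^2 + (p 1)^2) = 0 := by
    have h : dist ((1-u₂) • i₁ + u₂ • i₂) ((1-t) • a + t • b) ^ 2 =
        dist ((1-t) • a + t • b) p ^ 2 := by rw [hs2]
    rw [dist_sq_eq', dist_sq_eq'] at h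
    simp only [comb_apply', ha, hb, mul_zero, add_zero, sub_zero, zero_sub, neg_sq] at h
    linarith
  -- membership in moving ball, in coordinates
  have memball : ∀ s : ℝ, ∀ x : EuclideanSpace ℝ (Fin 2),
      x ∈ closedBall ((1-s) • a + s • b) (dist ((1-s) • a + s • b) p) ↔
      (x 0 - ((1-s) * a 0 + s * b 0))^2 + (x 1)^2 ≤
        (((1-s) * a 0 + s * b 0) - p 0)^2 + (p 1)^2 := by
    intro s x
    rw [mem_closedBall, sq_le_sq_iff_of_nonneg' dist_nonneg dist_nonneg,
      dist_sq_eq', dist_sq_eq']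
    simp only [comb_apply', ha, hb, mul_zero, add_zero, sub_zero, zero_sub, neg_sq]
  have hsub1 : closure (closedBall a (dist a p) \ closedBall b (dist b p)) ⊆
      closedBall a (dist a p) :=
    closure_minimal diff_subset isClosed_closedBall
  have hsub2 : closure (closedBall a (dist a p) \ closedBall b (dist b p)) ⊆
      (ball b (dist b p))ᶜ :=
    closure_minimal (fun x hx hbx => hx.2 (ball_subset_closedBall hbx))
      isOpen_ball.isClosed_compl
  have hFa : ∀ x : EuclideanSpace ℝ (Fin 2),
      x ∈ segment ℝ ((1-u₁) • i₁ + u₁ • i₂) ((1-u₂) • i₁ + u₂ • i₂) →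
      (x 0 - a 0)^2 + (x 1)^2 - ((a 0 - p 0)^2 + (p 1)^2) ≤ 0 := by
    intro x hx
    have h := hsub1 (hseg hx)
    rw [mem_closedBall, sq_le_sq_iff_of_nonneg' dist_nonneg dist_nonneg,
      dist_sq_eq', dist_sq_eq'] at h
    simp only [ha, sub_zero, zero_sub, neg_sq] at h
    linarith
  have hFb : ∀ x : EuclideanSpace ℝ (Fin 2),
      x ∈ segment ℝ ((1-u₁) • i₁ + u₁ • i₂) ((1-u₂) • i₁ + u₂ • i₂) →
      0 ≤ (x 0 - b 0)^2 + (x 1)^2 - ((b 0 - p 0)^2 + (p 1)^2) := by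
    intro x hx
    have h := hsub2 (hseg hx)
    rw [mem_compl_iff, mem_ball, not_lt, sq_le_sq_iff_of_nonneg' dist_nonneg dist_nonneg,
      dist_sq_eq', dist_sq_eq'] at h
    simp only [hb, sub_zero, zero_sub, neg_sq] at h
    linarith
  -- abbreviations
  have hA : 0 < (i₂ 0 - i₁ 0)^2 + (i₂ 1 - i₁ 1)^2 := by
    have hcoord : i₁ 0 ≠ i₂ 0 ∨ i₁ 1 ≠ i₂ 1 := by
      by_contra hcon
      push_neg at hcon
      exact hne (ext2' hcon.1 hcon.2)
    rcases hcoord with h | h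
    · rcases (sub_ne_zero.2 (Ne.symm h)).lt_or_gt with h' | h'
      · have := sq_pos_of_neg h'
        linarith [sq_nonneg (i₂ 1 - i₁ 1)]
      · have := sq_pos_of_pos h'
        linarith [sq_nonneg (i₂ 1 - i₁ 1)]
    · rcases (sub_ne_zero.2 (Ne.symm h)).lt_or_gt with h' | h'
      · have := sq_pos_of_neg h'
        linarith [sq_nonneg (i₂ 0 - i₁ 0)]
      · have := sq_pos_of_pos h'
        linarith [sq_nonneg (i₂ 0 - i₁ 0)]
  -- the fundamental quadratic identity
  have hQeq : ∀ l u : ℝ,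
      ((1-u) * i₁ 0 + u * i₂ 0 - ((1-(t+l)) * a 0 + (t+l) * b 0))^2 +
        ((1-u) * i₁ 1 + u * i₂ 1)^2 -
        ((((1-(t+l)) * a 0 + (t+l) * b 0) - p 0)^2 + (p 1)^2) =
      Qp ((i₂ 0 - i₁ 0)^2 + (i₂ 1 - i₁ 1)^2) (-2*(b 0 - a 0)*(i₂ 0 - i₁ 0))
        (2*(b 0 - a 0)*(p 0 - i₁ 0)) u₁ u₂ l u := by
    intro l u
    apply mul_left_cancel₀ h12'
    unfold Qp
    linear_combination (u₂ - u) * e1 + (u - u₁) * e2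
  -- hypotheses of the key lemma
  have hg1 : 0 ≤ -2*(b 0 - a 0)*(i₂ 0 - i₁ 0) * u₁ + 2*(b 0 - a 0)*(p 0 - i₁ 0) := by
    have h1 := hFa _ (left_mem_segment ℝ _ _)
    have h2 := hFb _ (left_mem_segment ℝ _ _)
    simp only [comb_apply'] at h1 h2
    linarith
  have hg2 : 0 ≤ -2*(b 0 - a 0)*(i₂ 0 - i₁ 0) * u₂ + 2*(b 0 - a 0)*(p 0 - i₁ 0) := by
    have h1 := hFa _ (right_mem_segment ℝ _ _)
    have h2 := hFb _ (right_mem_segment ℝ _ _)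
    simp only [comb_apply'] at h1 h2
    linarith
  have hmemseg : ∀ u : ℝ, u₁ ≤ u → u ≤ u₂ →
      (1-u) • i₁ + u • i₂ ∈
        segment ℝ ((1-u₁) • i₁ + u₁ • i₂) ((1-u₂) • i₁ + u₂ • i₂) := by
    intro u hu1 hu2
    rw [segment_eq_image]
    refine ⟨(u - u₁) / (u₂ - u₁), ⟨div_nonneg (by linarith) (by linarith),
      (div_le_one (by linarith)).2 (by linarith)⟩, ?_⟩
    apply ext2' <;> · simp only [comb_apply']; field_simp; ring
  have hQL : ∀ u : ℝ, u₁ ≤ u → u ≤ u₂ →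
      0 ≤ Qp ((i₂ 0 - i₁ 0)^2 + (i₂ 1 - i₁ 1)^2) (-2*(b 0 - a 0)*(i₂ 0 - i₁ 0))
        (2*(b 0 - a 0)*(p 0 - i₁ 0)) u₁ u₂ (1-t) u := by
    intro u hu1 hu2
    have h := hFb _ (hmemseg u hu1 hu2)
    simp only [comb_apply'] at h
    have hq := hQeq (1-t) u
    linarith [h, hq]
  obtain ⟨l, hl0, hlL, w, hw1, hw2, hw0, hQpos, huniq⟩ :=
    key_lemma _ _ _ u₁ u₂ (1-t) hA h12 (by linarith) hg1 hg2 hQL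
  refine ⟨(1-(t+l)) • a + (t+l) • b, ?_, (1-w) • i₁ + w • i₂, ?_, ?_⟩
  · rw [segment_eq_image]
    exact ⟨t + l, ⟨by linarith, by linarith⟩, rfl⟩
  · rw [segment_eq_image]
    refine ⟨(w - u₁) / (u₂ - u₁), ⟨div_nonneg (by linarith) (by linarith),
      (div_le_one (by linarith)).2 (by linarith)⟩, ?_⟩
    apply ext2' <;> · simp only [comb_apply']; field_simp; ring
  · rw [Set.eq_singleton_iff_unique_mem]
    constructor
    · constructor
      · rw [segment_eq_image]
        exact ⟨w, ⟨by linarith, by linarith⟩, rfl⟩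
      · rw [memball (t+l)]
        simp only [comb_apply']
        have hq := hQeq l w
        linarith [hq, hw0]
    · rintro x ⟨hxs, hxb⟩
      rw [segment_eq_image] at hxs
      obtain ⟨u, ⟨hu0, hu1⟩, rfl⟩ := hxs
      rw [memball (t+l)] at hxb
      simp only [comb_apply'] at hxb
      have hq := hQeq l u
      have h0 : Qp ((i₂ 0 - i₁ 0)^2 + (i₂ 1 - i₁ 1)^2) (-2*(b 0 - a 0)*(i₂ 0 - i₁ 0))
          (2*(b 0 - a 0)*(p 0 - i₁ 0)) u₁ u₂ l u = 0 :=
        le_antisymm (by linarith) (hQpos u)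
      rw [huniq u h0]



/-- Corollary 1(ii): if a line segment `I = [i₁, i₂]` meets the circle `C_p(r)`
(`r ∈ [a,b]`, `a`, `b` on the x-axis with `a₁ ≤ b₁`) at two distinct points
`w₁, w₂` such that `[w₁, w₂]` lies in the closure of `D_p(a) \ D_p(b)`, then
`I` is tangent to some circle `C_p(r')` with `r' ∈ [a,b]`, the tangency point
lying on `[w₁, w₂]`: there are `r' ∈ [a,b]` and `z ∈ [w₁, w₂]` with
`I ∩ D_p(r') = {z}`. -/
theorem segment_tangent_circle
    (a b p r i₁ i₂ w₁ w₂ : EuclideanSpace ℝ (Fin 2))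
    (ha : a 1 = 0) (hb : b 1 = 0) (hab : a 0 ≤ b 0)
    (hr : r ∈ segment ℝ a b)
    (hw₁ : w₁ ∈ segment ℝ i₁ i₂ ∩ Metric.sphere r (dist r p))
    (hw₂ : w₂ ∈ segment ℝ i₁ i₂ ∩ Metric.sphere r (dist r p))
    (hww : w₁ ≠ w₂)
    (hseg : segment ℝ w₁ w₂ ⊆
      closure (Metric.closedBall a (dist a p) \ Metric.closedBall b (dist b p))) :
    ∃ r' ∈ segment ℝ a b, ∃ z ∈ segment ℝ w₁ w₂,
      segment ℝ i₁ i₂ ∩ Metric.closedBall r' (dist r' p) = {z} := by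
  obtain ⟨hw1s, hw1sph⟩ := hw₁
  obtain ⟨hw2s, hw2sph⟩ := hw₂
  have hc : a 0 < b 0 := by
    rcases lt_or_eq_of_le hab with h | h
    · exact h
    · exfalso
      have hab' : a = b := ext2' h (ha.trans hb.symm)
      have hmem := hseg (left_mem_segment ℝ w₁ w₂)
      rw [hab'] at hmem
      simp at hmem
  have hne : i₁ ≠ i₂ := by
    rintro rfl
    rw [segment_same] at hw1s hw2s
    exact hww (hw1s.trans hw2s.symm)
  rw [segment_eq_image] at hr hw1s hw2s
  obtain ⟨t, ⟨ht0, ht1⟩, hrt⟩ := hr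
  obtain ⟨u₁, ⟨hu10, hu11⟩, hw1t⟩ := hw1s
  obtain ⟨u₂, ⟨hu20, hu21⟩, hw2t⟩ := hw2s
  have hune : u₁ ≠ u₂ := by
    rintro rfl
    exact hww (hw1t.symm.trans hw2t)
  rw [Metric.mem_sphere] at hw1sph hw2sph
  subst hrt
  rcases hune.lt_or_gt with h12 | h12
  · exact aux a b p i₁ i₂ w₁ w₂ ha hb t ht0 ht1 u₁ u₂ h12 hu10 hu21 hne hw1t hw2t
      hw1sph hw2sph hc hseg
  · have hseg' : segment ℝ w₂ w₁ ⊆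
        closure (Metric.closedBall a (dist a p) \ Metric.closedBall b (dist b p)) := by
      rwa [segment_symm]
    obtain ⟨r', hr', z, hz, hset⟩ := aux a b p i₁ i₂ w₂ w₁ ha hb t ht0 ht1 u₂ u₁ h12
      hu20 hu11 hne hw2t hw1t hw2sph hw1sph hc hseg'
    exact ⟨r', hr', z, (segment_symm ℝ w₂ w₁) ▸ hz, hset⟩
end
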